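/- Let r ∈ ℕ, let (a_0, …, a_r) be irreducible 𝓑_r-data on a nonzero ℂ-vector space M, and let α, β ∈ ℂ. Then the Virasoro module F(M, A(α,β)) is reducible (i.e., there is a ℂ-subspace N of M ⊗ ℂ[x, x^{−1}] invariant under every D_m with N ≠ 0 and N ≠ M ⊗ ℂ[x, x^{−1}]) if and only if there exists γ ∈ ℂ such that M is one-dimensional with a_0 = γ·id_M and a_i = 0 for 1 ≤ i ≤ r, α ∈ ℤ, and β + γ ∈ {0, 1}. -/

import Mathlib

open TensorProduct

/-- `𝓑_r`-data on a ℂ-vector space `M`. -/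
structure BrData (r : ℕ) (M : Type*) [AddCommGroup M] [Module ℂ M] where
  a : Fin (r + 1) → Module.End ℂ M
  rel : ∀ i j : Fin (r + 1), ∀ h : (i : ℕ) + (j : ℕ) ≤ r,
    a i * a j - a j * a i
      = (((j : ℕ) : ℂ) - ((i : ℕ) : ℂ)) • a ⟨(i : ℕ) + (j : ℕ), Nat.lt_succ_of_le h⟩
  comm : ∀ i j : Fin (r + 1), r < (i : ℕ) + (j : ℕ) → a i * a j = a j * a i

/-- The operator `g(m) = Σ_{i=0}^r (m^{i+1}/(i+1)!)·a_i`. -/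
noncomputable def gOp {r : ℕ} {M : Type*} [AddCommGroup M] [Module ℂ M]
    (B : BrData r M) (m : ℤ) : Module.End ℂ M :=
  ∑ i : Fin (r + 1), (((m : ℂ) ^ ((i : ℕ) + 1)) / (Nat.factorial ((i : ℕ) + 1) : ℂ)) • B.a i

/-- `IsFA B α β D` says that `D` is the family of operators of the Virasoro module
`F(M, A(α,β)) = M ⊗ ℂ[x,x⁻¹]`, i.e. `D_m(v ⊗ x^n) = ((n + α + βm)·v + g(m)v) ⊗ x^{n+m}`. -/
def IsFA {r : ℕ} {M : Type*} [AddCommGroup M] [Module ℂ M] (B : BrData r M)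
    (al be : ℂ) (D : ℤ → Module.End ℂ (M ⊗[ℂ] LaurentPolynomial ℂ)) : Prop :=
  ∀ (m n : ℤ) (v : M),
    D m (v ⊗ₜ[ℂ] LaurentPolynomial.T n)
      = ((((n : ℂ) + al + be * (m : ℂ)) • v + gOp B m v) ⊗ₜ[ℂ] LaurentPolynomial.T (n + m))

namespace FAaux

open Polynomial

variable {r : ℕ} {M : Type*} [AddCommGroup M] [Module ℂ M]

/-! ### Vandermonde extraction -/

lemma vand_ext {d : ℕ} (w : Fin (d+1) → M) (S : Submodule ℂ M)
    (h : ∀ m : ℤ, (∑ k : Fin (d+1), ((m : ℂ))^(k:ℕ) • w k) ∈ S) : ∀ k, w k ∈ S := by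
  classical
  set V : Matrix (Fin (d+1)) (Fin (d+1)) ℂ := Matrix.vandermonde (fun i => ((i:ℕ) : ℂ)) with hVdef
  have hdet : IsUnit V.det := by
    rw [hVdef, Matrix.det_vandermonde]
    rw [isUnit_iff_ne_zero]
    rw [Finset.prod_ne_zero_iff]
    intro i _
    rw [Finset.prod_ne_zero_iff]
    intro j hj
    rw [Finset.mem_Ioi] at hj
    have hlt : (i:ℕ) < (j:ℕ) := hj
    rw [sub_ne_zero]
    exact_mod_cast Nat.ne_of_gt hlt
  have hWV : V⁻¹ * V = 1 := Matrix.nonsing_inv_mul V hdet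
  intro k
  have hmem : ∀ i : Fin (d+1), (∑ j : Fin (d+1), V i j • w j) ∈ S := by
    intro i
    have := h ((i:ℕ) : ℤ)
    have hcast : ∀ j : Fin (d+1), ((((i:ℕ):ℤ)):ℂ)^(j:ℕ) • w j = V i j • w j := by
      intro j
      have h1 : ((((i:ℕ):ℤ)):ℂ) = ((i:ℕ):ℂ) := Int.cast_natCast _
      rw [h1, hVdef, Matrix.vandermonde_apply]
    have heq : (∑ j : Fin (d+1), V i j • w j)
        = ∑ j : Fin (d+1), ((((i:ℕ):ℤ)):ℂ)^(j:ℕ) • w j :=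
      Finset.sum_congr rfl (fun j _ => (hcast j).symm)
    rw [heq]
    exact this
  have key : w k = ∑ i : Fin (d+1), V⁻¹ k i • (∑ j : Fin (d+1), V i j • w j) := by
    have : ∀ i : Fin (d+1), V⁻¹ k i • (∑ j : Fin (d+1), V i j • w j)
        = ∑ j : Fin (d+1), (V⁻¹ k i * V i j) • w j := by
      intro i
      rw [Finset.smul_sum]
      exact Finset.sum_congr rfl (fun j _ => by rw [smul_smul])
    rw [Finset.sum_congr rfl (fun i _ => this i)]
    rw [Finset.sum_comm]
    have : ∀ j : Fin (d+1), (∑ i : Fin (d+1), (V⁻¹ k i * V i j) • w j)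
        = ((V⁻¹ * V) k j) • w j := by
      intro j
      rw [← Finset.sum_smul, Matrix.mul_apply]
    rw [Finset.sum_congr rfl (fun j _ => this j), hWV]
    simp [Matrix.one_apply]
  rw [key]
  exact Submodule.sum_mem S (fun i _ => Submodule.smul_mem S _ (hmem i))

/-! ### Evaluation of `End`-valued polynomials at central scalars -/

lemma central_commute (m : ℂ) (a : Module.End ℂ M) :
    Commute a (m • (1 : Module.End ℂ M)) := by
  have := (Algebra.commutes m a)
  rw [Algebra.algebraMap_eq_smul_one] at this
  exact (Commute.symm this)

lemma ev2_mul (m : ℂ) (p q : Polynomial (Module.End ℂ M)) :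
    eval₂ (RingHom.id _) (m • (1 : Module.End ℂ M)) (p * q)
      = eval₂ (RingHom.id _) (m • 1) p * eval₂ (RingHom.id _) (m • 1) q :=
  eval₂_mul_noncomm _ _ (fun _ => central_commute m _)

lemma ev2_eq_sum (Q : Polynomial (Module.End ℂ M)) (Dn : ℕ) (hdeg : Q.natDegree ≤ Dn) (m : ℂ) :
    eval₂ (RingHom.id _) (m • (1 : Module.End ℂ M)) Q
      = ∑ k : Fin (Dn+1), m^(k:ℕ) • Q.coeff k := by
  conv_lhs => rw [Polynomial.as_sum_range' Q (Dn+1) (Nat.lt_succ_of_le hdeg)]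
  rw [Polynomial.eval₂_finset_sum]
  rw [Fin.sum_univ_eq_sum_range (fun k => m^k • Q.coeff k)]
  refine Finset.sum_congr rfl (fun k _ => ?_)
  rw [eval₂_monomial, RingHom.id_apply, _root_.smul_pow, one_pow, mul_smul_comm, mul_one]

lemma coeff_apply_mem (S : Submodule ℂ M) (v : M) (Q : Polynomial (Module.End ℂ M)) (Dn : ℕ)
    (hdeg : Q.natDegree ≤ Dn)
    (h : ∀ m : ℤ, (eval₂ (RingHom.id _) (((m:ℂ)) • (1 : Module.End ℂ M)) Q) v ∈ S) :
    ∀ k : ℕ, (Q.coeff k) v ∈ S := by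
  have h' : ∀ m : ℤ, (∑ k : Fin (Dn+1), ((m:ℂ))^(k:ℕ) • (Q.coeff k) v) ∈ S := by
    intro m
    have := h m
    rw [ev2_eq_sum Q Dn hdeg] at this
    simpa [LinearMap.sum_apply, LinearMap.smul_apply] using this
  have h2 := vand_ext _ S h'
  intro k
  by_cases hk : k ≤ Dn
  · exact h2 ⟨k, Nat.lt_succ_of_le hk⟩
  · rw [Polynomial.coeff_eq_zero_of_natDegree_lt (lt_of_le_of_lt hdeg (by omega))]
    simp

lemma coeff_mul_top {p q : Polynomial (Module.End ℂ M)} {dp dq : ℕ}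
    (hp : p.natDegree ≤ dp) (hq : q.natDegree ≤ dq) :
    (p*q).coeff (dp + dq) = p.coeff dp * q.coeff dq := by
  rw [coeff_mul]
  rw [Finset.sum_eq_single (dp, dq)]
  · intro b hb hne
    rw [Finset.HasAntidiagonal.mem_antidiagonal] at hb
    rcases Nat.lt_or_ge dp b.1 with h1 | h1
    · rw [Polynomial.coeff_eq_zero_of_natDegree_lt (lt_of_le_of_lt hp h1), zero_mul]
    · have h2 : dq < b.2 := by
        rcases Nat.lt_or_ge dq b.2 with h | h
        · exact h
        · exfalso
          apply hne
          have hb1 : b.1 = dp := by omega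
          have hb2 : b.2 = dq := by omega
          exact Prod.ext hb1 hb2
      rw [Polynomial.coeff_eq_zero_of_natDegree_lt (lt_of_le_of_lt hq h2), mul_zero]
  · intro hmem
    exact absurd (by simp : ((dp, dq) : ℕ × ℕ) ∈ Finset.HasAntidiagonal.antidiagonal (dp + dq)) hmem

/-! ### The operator polynomials -/

noncomputable def gcoef (B : BrData r M) (i : Fin (r+1)) : Module.End ℂ M :=
  ((Nat.factorial ((i:ℕ)+1) : ℂ))⁻¹ • B.a i

noncomputable def pgen (B : BrData r M) (c e : ℂ) (q : Polynomial ℂ) :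
    Polynomial (Module.End ℂ M) :=
  C (c • (1 : Module.End ℂ M)) + C (e • (1 : Module.End ℂ M)) * q.map (algebraMap ℂ _)
    + ∑ i : Fin (r+1), C (gcoef B i) * (q^((i:ℕ)+1)).map (algebraMap ℂ _)

lemma ev2_map (m : ℂ) (q : Polynomial ℂ) :
    eval₂ (RingHom.id (Module.End ℂ M)) (m • 1) (q.map (algebraMap ℂ _))
      = (q.eval m) • (1 : Module.End ℂ M) := by
  rw [Polynomial.eval₂_map]
  have h1 : (RingHom.id (Module.End ℂ M)).comp (algebraMap ℂ (Module.End ℂ M))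
      = algebraMap ℂ (Module.End ℂ M) := RingHom.id_comp _
  rw [h1]
  have h2 : (m • (1 : Module.End ℂ M)) = algebraMap ℂ (Module.End ℂ M) m :=
    (Algebra.algebraMap_eq_smul_one m).symm
  rw [h2, Polynomial.eval₂_at_apply, Algebra.algebraMap_eq_smul_one]

lemma gOp_eq_sum (B : BrData r M) (m : ℤ) :
    gOp B m = ∑ i : Fin (r+1), ((m:ℂ))^((i:ℕ)+1) • gcoef B i := by
  unfold gOp gcoef
  refine Finset.sum_congr rfl (fun i _ => ?_)
  rw [div_eq_mul_inv, mul_smul]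

lemma ev_pgen (B : BrData r M) (c e : ℂ) (q : Polynomial ℂ) (m : ℂ) :
    eval₂ (RingHom.id _) (m • (1 : Module.End ℂ M)) (pgen B c e q)
      = (c + e * q.eval m) • 1 + ∑ i : Fin (r+1), ((q.eval m))^((i:ℕ)+1) • gcoef B i := by
  unfold pgen
  rw [eval₂_add, eval₂_add, eval₂_C, RingHom.id_apply]
  rw [ev2_mul, eval₂_C, RingHom.id_apply, ev2_map]
  rw [Polynomial.eval₂_finset_sum]
  have hsum : ∀ i : Fin (r+1),
      eval₂ (RingHom.id _) (m • (1 : Module.End ℂ M))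
        (C (gcoef B i) * (q^((i:ℕ)+1)).map (algebraMap ℂ _))
      = ((q.eval m))^((i:ℕ)+1) • gcoef B i := by
    intro i
    rw [ev2_mul, eval₂_C, RingHom.id_apply, ev2_map, eval_pow, mul_smul_comm, mul_one]
  rw [Finset.sum_congr rfl (fun i _ => hsum i)]
  congr 1
  rw [smul_mul_smul, one_mul, add_smul]

lemma ev_pbase (B : BrData r M) (c e : ℂ) (m : ℤ) :
    eval₂ (RingHom.id _) (((m:ℂ)) • (1 : Module.End ℂ M)) (pgen B c e X)
      = (c + e*(m:ℂ)) • 1 + gOp B m := by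
  rw [ev_pgen, gOp_eq_sum, eval_X]

lemma ev_prev (B : BrData r M) (c e : ℂ) (d m : ℤ) :
    eval₂ (RingHom.id _) (((m:ℂ)) • (1 : Module.End ℂ M)) (pgen B c e (C ((d:ℂ)) - X))
      = (c + e*((d:ℂ) - (m:ℂ))) • 1 + gOp B (d - m) := by
  rw [ev_pgen, gOp_eq_sum]
  have he : (C ((d:ℂ)) - X).eval (m:ℂ) = (d:ℂ) - (m:ℂ) := by
    simp [eval_sub, eval_C, eval_X]
  rw [he]
  congr 1
  refine Finset.sum_congr rfl (fun i _ => ?_)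
  congr 1
  push_cast
  ring

lemma deg_pgen_le (B : BrData r M) (c e : ℂ) (q : Polynomial ℂ) (hq : q.natDegree ≤ 1) (t : ℕ)
    (hvan : ∀ i : Fin (r+1), t < (i:ℕ) → B.a i = 0) :
    (pgen B c e q).natDegree ≤ t+1 := by
  unfold pgen
  refine le_trans (natDegree_add_le _ _) (max_le (le_trans (natDegree_add_le _ _) (max_le ?_ ?_)) ?_)
  · simp [natDegree_C]
  · refine le_trans natDegree_mul_le ?_
    rw [natDegree_C, zero_add]
    exact le_trans natDegree_map_le (by omega)
  · refine natDegree_sum_le_of_forall_le _ _ (fun i _ => ?_)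
    by_cases hi : (i:ℕ) ≤ t
    · refine le_trans natDegree_mul_le ?_
      rw [natDegree_C, zero_add]
      refine le_trans natDegree_map_le (le_trans natDegree_pow_le ?_)
      calc ((i:ℕ)+1) * q.natDegree ≤ ((i:ℕ)+1) * 1 := Nat.mul_le_mul_left _ hq
        _ ≤ t+1 := by omega
    · have : B.a i = 0 := hvan i (by omega)
      rw [gcoef, this, smul_zero, map_zero, zero_mul]
      simp

lemma gsum_coeff (B : BrData r M) (q : Polynomial ℂ) (n : ℕ) :
    (∑ i : Fin (r+1), C (gcoef B i) * (q^((i:ℕ)+1)).map (algebraMap ℂ (Module.End ℂ M))).coeff n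
      = ∑ i : Fin (r+1), gcoef B i * algebraMap ℂ (Module.End ℂ M) ((q^((i:ℕ)+1)).coeff n) := by
  rw [Polynomial.finset_sum_coeff]
  exact Finset.sum_congr rfl (fun i _ => by rw [coeff_C_mul, Polynomial.coeff_map])

lemma coeff_pbase_zero (B : BrData r M) (c e : ℂ) :
    (pgen B c e X).coeff 0 = c • 1 := by
  unfold pgen
  rw [coeff_add, coeff_add, coeff_C, if_pos rfl, coeff_C_mul, Polynomial.map_X, coeff_X_zero,
    mul_zero, add_zero, gsum_coeff]
  rw [Finset.sum_eq_zero, add_zero]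
  intro i _
  rw [coeff_X_pow, if_neg (by omega), map_zero, mul_zero]

lemma coeff_pbase_one (B : BrData r M) (c e : ℂ) :
    (pgen B c e X).coeff 1 = e • 1 + B.a 0 := by
  unfold pgen
  rw [coeff_add, coeff_add, coeff_C, if_neg (by omega), coeff_C_mul, Polynomial.map_X,
    coeff_X_one, mul_one, zero_add, gsum_coeff]
  congr 1
  rw [Finset.sum_eq_single (0 : Fin (r+1))]
  · rw [coeff_X_pow]
    simp [gcoef, Nat.factorial]
  · intro i _ hi
    rw [coeff_X_pow, if_neg, map_zero, mul_zero]
    have : (i:ℕ) ≠ 0 := fun h => hi (Fin.ext h)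
    omega
  · intro h
    exact absurd (Finset.mem_univ _) h

lemma coeff_pbase_succ (B : BrData r M) (c e : ℂ) (s : ℕ) (h1 : 1 ≤ s) (hsr : s ≤ r) :
    (pgen B c e X).coeff (s+1) = gcoef B ⟨s, by omega⟩ := by
  unfold pgen
  rw [coeff_add, coeff_add, coeff_C, if_neg (by omega), coeff_C_mul, Polynomial.map_X,
    Polynomial.coeff_X, if_neg (by omega), mul_zero, add_zero, zero_add, gsum_coeff]
  rw [Finset.sum_eq_single (⟨s, by omega⟩ : Fin (r+1))]
  · rw [coeff_X_pow, if_pos rfl, map_one, mul_one]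
  · intro i _ hi
    have hne : (i:ℕ) ≠ s := fun hc => hi (Fin.ext (show (i:ℕ) = s from hc))
    rw [coeff_X_pow, if_neg (by omega), map_zero, mul_zero]
  · intro h
    exact absurd (Finset.mem_univ _) h

lemma coeff_CdX_pow_top (d : ℂ) (s : ℕ) :
    ((C d - X : Polynomial ℂ)^(s+1)).coeff (s+1) = (-1:ℂ)^(s+1) := by
  have h1 : (C d - X : Polynomial ℂ) = -(X - C d) := by ring
  rw [h1, neg_pow]
  have h2 : ((-1 : Polynomial ℂ))^(s+1) = C ((-1:ℂ)^(s+1)) := by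
    rw [← C_1, ← C_neg, ← C_pow]
  rw [h2, coeff_C_mul]
  have hm : ((X - C d : Polynomial ℂ)^(s+1)).coeff (s+1) = 1 := by
    have hmon : ((X - C d : Polynomial ℂ)^(s+1)).Monic := (monic_X_sub_C d).pow _
    have hdeg : ((X - C d : Polynomial ℂ)^(s+1)).natDegree = s+1 := by
      rw [natDegree_pow, natDegree_X_sub_C, mul_one]
    have := hmon.coeff_natDegree
    rwa [hdeg] at this
  rw [hm, mul_one]

lemma deg_CdX_le (d : ℂ) : (C d - X : Polynomial ℂ).natDegree ≤ 1 := by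
  refine le_trans (natDegree_sub_le _ _) (max_le (by simp [natDegree_C]) (by simp))

lemma coeff_prev_one (B : BrData r M) (c e d : ℂ)
    (hvan : ∀ i : Fin (r+1), 0 < (i:ℕ) → B.a i = 0) :
    (pgen B c e (C d - X)).coeff 1 = -(e • 1) - B.a 0 := by
  unfold pgen
  rw [coeff_add, coeff_add, coeff_C, if_neg (by omega), zero_add, coeff_C_mul]
  have hmap : ((C d - X : Polynomial ℂ).map (algebraMap ℂ (Module.End ℂ M))).coeff 1
      = algebraMap ℂ (Module.End ℂ M) (-1) := by
    rw [Polynomial.coeff_map]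
    congr 1
    rw [coeff_sub, coeff_C, if_neg (by omega), coeff_X_one, zero_sub]
  rw [hmap, gsum_coeff]
  rw [Finset.sum_eq_single (0 : Fin (r+1))]
  · simp only [Fin.val_zero, zero_add, pow_one]
    have h0 : ((C d - X : Polynomial ℂ)).coeff 1 = -1 := by
      rw [coeff_sub, coeff_C, if_neg (by omega), coeff_X_one, zero_sub]
    rw [h0]
    have hg : gcoef B 0 = B.a 0 := by simp [gcoef, Nat.factorial]
    rw [hg, map_neg, map_one, mul_neg, mul_one, mul_neg, mul_one]
    abel
  · intro i _ hi
    have : B.a i = 0 := hvan i (Nat.pos_of_ne_zero (fun h => hi (Fin.ext h)))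
    rw [gcoef, this, smul_zero, zero_mul]
  · intro h
    exact absurd (Finset.mem_univ _) h

lemma coeff_prev_succ (B : BrData r M) (c e d : ℂ) (s : ℕ) (h1 : 1 ≤ s) (hsr : s ≤ r)
    (hvan : ∀ i : Fin (r+1), s < (i:ℕ) → B.a i = 0) :
    (pgen B c e (C d - X)).coeff (s+1) = ((-1:ℂ)^(s+1)) • gcoef B ⟨s, by omega⟩ := by
  unfold pgen
  rw [coeff_add, coeff_add, coeff_C, if_neg (by omega), zero_add]
  have he : (C (e • (1 : Module.End ℂ M)) *
      (C d - X : Polynomial ℂ).map (algebraMap ℂ (Module.End ℂ M))).coeff (s+1) = 0 := by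
    refine Polynomial.coeff_eq_zero_of_natDegree_lt ?_
    refine lt_of_le_of_lt (le_trans natDegree_mul_le ?_) (show 1 < s+1 by omega)
    rw [natDegree_C, zero_add]
    exact le_trans natDegree_map_le (deg_CdX_le d)
  rw [he, zero_add, gsum_coeff]
  rw [Finset.sum_eq_single (⟨s, by omega⟩ : Fin (r+1))]
  · rw [coeff_CdX_pow_top, Algebra.algebraMap_eq_smul_one, mul_smul_comm, mul_one]
  · intro i _ hi
    by_cases hlt : (i:ℕ) < s
    · have : ((C d - X : Polynomial ℂ)^((i:ℕ)+1)).coeff (s+1) = 0 := by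
        refine Polynomial.coeff_eq_zero_of_natDegree_lt ?_
        refine lt_of_le_of_lt (le_trans natDegree_pow_le ?_) (show s < s+1 by omega)
        calc ((i:ℕ)+1) * (C d - X : Polynomial ℂ).natDegree ≤ ((i:ℕ)+1) * 1 :=
              Nat.mul_le_mul_left _ (deg_CdX_le d)
          _ ≤ s := by omega
      rw [this, map_zero, mul_zero]
    · have hgt : s < (i:ℕ) := by
        rcases Nat.lt_or_ge (i:ℕ) s with h | h
        · omega
        · rcases Nat.eq_or_lt_of_le h with h' | h'
          · exact absurd (Fin.ext (show (i:ℕ) = s from h'.symm)).symm (Ne.symm hi)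
          · omega
      rw [gcoef, hvan i hgt, smul_zero, zero_mul]
  · intro h
    exact absurd (Finset.mem_univ _) h


/-! ### The master extraction lemma -/

lemma master (B : BrData r M) (S : Submodule ℂ M) (v : M) (c e : ℂ)
    (h : ∀ m : ℤ, ((c + e*(m:ℂ)) • v + gOp B m v) ∈ S) :
    c • v ∈ S ∧ ((e • v + B.a 0 v) ∈ S) ∧ (∀ i : Fin (r+1), 1 ≤ (i:ℕ) → B.a i v ∈ S) := by
  have hdeg : (pgen B c e X).natDegree ≤ r+1 :=
    deg_pgen_le B c e X natDegree_X_le r (fun i hi => absurd hi (by have := i.isLt; omega))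
  have h' : ∀ m : ℤ,
      ((eval₂ (RingHom.id _) (((m:ℂ)) • (1 : Module.End ℂ M)) (pgen B c e X)) v ∈ S) := by
    intro m
    rw [ev_pbase]
    simpa [LinearMap.add_apply, LinearMap.smul_apply, Module.End.one_apply] using h m
  have hc := coeff_apply_mem S v _ (r+1) hdeg h'
  refine ⟨?_, ?_, ?_⟩
  · have := hc 0
    rwa [coeff_pbase_zero, LinearMap.smul_apply, Module.End.one_apply] at this
  · have := hc 1
    rwa [coeff_pbase_one, LinearMap.add_apply, LinearMap.smul_apply, Module.End.one_apply] at this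
  · intro i hi
    have h2 := hc ((i:ℕ)+1)
    rw [coeff_pbase_succ B c e (i:ℕ) hi (by have := i.isLt; omega)] at h2
    have h3 : B.a i v = ((Nat.factorial ((i:ℕ)+1) : ℂ)) •
        ((gcoef B ⟨(i:ℕ), by have := i.isLt; omega⟩) v) := by
      have hii : (⟨(i:ℕ), by have := i.isLt; omega⟩ : Fin (r+1)) = i := Fin.ext rfl
      rw [hii, gcoef, LinearMap.smul_apply, smul_smul,
        mul_inv_cancel₀ (by exact_mod_cast (Nat.factorial_ne_zero _)), one_smul]
    rw [h3]
    exact Submodule.smul_mem S _ h2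

/-! ### The core classification -/

lemma core (B : BrData r M)
    (hirr : ∀ N : Submodule ℂ M, (∀ i : Fin (r + 1), ∀ v ∈ N, B.a i v ∈ N) → N = ⊥ ∨ N = ⊤)
    (al be : ℂ) (Nn : ℤ → Submodule ℂ M)
    (htrans : ∀ (n m : ℤ), ∀ v ∈ Nn n, (((n:ℂ) + al + be * (m:ℂ)) • v + gOp B m v) ∈ Nn (n+m))
    (hne : ∃ n₁ : ℤ, Nn n₁ ≠ ⊥) (hpr : ∃ n₀ : ℤ, Nn n₀ ≠ ⊤) :
    (∀ i : Fin (r+1), (i:ℕ) ≠ 0 → B.a i = 0) ∧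
    ∃ c : ℂ, B.a 0 = c • (1 : Module.End ℂ M) ∧ (be + c = 0 ∨ be + c = 1) := by
  -- J = ⊤
  have hJinv : ∀ i : Fin (r+1), ∀ v ∈ (⨆ n : ℤ, Nn n), B.a i v ∈ (⨆ n : ℤ, Nn n) := by
    intro i
    have hn : ∀ n : ℤ, Nn n ≤ (⨆ n : ℤ, Nn n).comap (B.a i) := by
      intro n v hv
      have hvJ : v ∈ (⨆ n : ℤ, Nn n) := (le_iSup Nn n) hv
      have hm : ∀ m : ℤ, ((((n:ℂ)+al) + be*(m:ℂ)) • v + gOp B m v) ∈ (⨆ n : ℤ, Nn n) :=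
        fun m => (le_iSup Nn (n+m)) (htrans n m v hv)
      obtain ⟨h0, h1, h2⟩ := master B _ v ((n:ℂ)+al) be hm
      rw [Submodule.mem_comap]
      rcases Nat.eq_zero_or_pos (i:ℕ) with hi | hi
      · have hi0 : i = 0 := Fin.ext (by simpa using hi)
        rw [hi0]
        have hexp : B.a 0 v = (be • v + B.a 0 v) - be • v := by abel
        rw [hexp]
        exact Submodule.sub_mem _ h1 (Submodule.smul_mem _ _ hvJ)
      · exact h2 i hi
    intro v hv
    exact Submodule.mem_comap.mp ((iSup_le hn) hv)
  have hJ : (⨆ n : ℤ, Nn n) = ⊤ := by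
    rcases hirr _ hJinv with h | h
    · exfalso
      obtain ⟨n₁, hn₁⟩ := hne
      exact hn₁ (le_bot_iff.mp ((le_iSup Nn n₁).trans h.le))
    · exact h
  -- K = ⊥
  have hKinv : ∀ i : Fin (r+1), ∀ v ∈ (⨅ n : ℤ, Nn n), B.a i v ∈ (⨅ n : ℤ, Nn n) := by
    intro i v hv
    rw [Submodule.mem_iInf]
    intro s
    have hvs : v ∈ Nn s := (Submodule.mem_iInf _).mp hv s
    have hm : ∀ m : ℤ, ((((s:ℂ)+al) + (be-1)*(m:ℂ)) • v + gOp B m v) ∈ Nn s := by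
      intro m
      have ht := htrans (s - m) m v ((Submodule.mem_iInf _).mp hv (s-m))
      rw [sub_add_cancel] at ht
      have hsc : (((s-m : ℤ):ℂ) + al + be*(m:ℂ)) = (((s:ℂ)+al) + (be-1)*(m:ℂ)) := by
        push_cast
        ring
      rwa [hsc] at ht
    obtain ⟨h0, h1, h2⟩ := master B _ v ((s:ℂ)+al) (be-1) hm
    rcases Nat.eq_zero_or_pos (i:ℕ) with hi | hi
    · have hi0 : i = 0 := Fin.ext (by simpa using hi)
      rw [hi0]
      have hexp : B.a 0 v = ((be-1) • v + B.a 0 v) - (be-1) • v := by abel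
      rw [hexp]
      exact Submodule.sub_mem _ h1 (Submodule.smul_mem _ _ hvs)
    · exact h2 i hi
  have hK : (⨅ n : ℤ, Nn n) = ⊥ := by
    rcases hirr _ hKinv with h | h
    · exact h
    · exfalso
      obtain ⟨n₀, h₀⟩ := hpr
      exact h₀ (top_le_iff.mp (h ▸ (iInf_le Nn n₀)))
  -- an operator mapping every Nn n into every Nn l is zero
  have killJ : ∀ (W : Module.End ℂ M),
      (∀ (n l : ℤ) (v : M), v ∈ Nn n → W v ∈ Nn l) → W = 0 := by
    intro W hW
    have hker : (⊤ : Submodule ℂ M) ≤ LinearMap.ker W := by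
      rw [← hJ]
      refine iSup_le ?_
      intro n v hv
      rw [LinearMap.mem_ker]
      have hmem : W v ∈ (⨅ n : ℤ, Nn n) := (Submodule.mem_iInf _).mpr (fun l => hW n l v hv)
      rwa [hK, Submodule.mem_bot] at hmem
    rw [← LinearMap.ker_eq_top]
    exact le_antisymm le_top hker
  -- two-step extraction
  have twostep : ∀ (s : ℕ), s ≤ r → (∀ i : Fin (r+1), s < (i:ℕ) → B.a i = 0) →
      ∀ (n l : ℤ) (v : M), v ∈ Nn n →
        (((pgen B ((l:ℂ)+al) (be-1) (C (((l - n : ℤ)):ℂ) - X)).coeff (s+1) *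
          (pgen B ((n:ℂ)+al) be X).coeff (s+1)) v ∈ Nn l) := by
    intro s hs hvan n l v hv
    have hdeg1 : (pgen B ((n:ℂ)+al) be X).natDegree ≤ s+1 :=
      deg_pgen_le B _ _ X natDegree_X_le s hvan
    have hdeg2 : (pgen B ((l:ℂ)+al) (be-1) (C (((l - n : ℤ)):ℂ) - X)).natDegree ≤ s+1 :=
      deg_pgen_le B _ _ _ (deg_CdX_le _) s hvan
    have hev : ∀ m : ℤ,
        ((eval₂ (RingHom.id _) (((m:ℂ)) • (1 : Module.End ℂ M))
          ((pgen B ((l:ℂ)+al) (be-1) (C (((l - n : ℤ)):ℂ) - X)) *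
            (pgen B ((n:ℂ)+al) be X))) v ∈ Nn l) := by
      intro m
      rw [ev2_mul, Module.End.mul_apply]
      have e1 : (eval₂ (RingHom.id _) (((m:ℂ)) • (1 : Module.End ℂ M))
          (pgen B ((n:ℂ)+al) be X)) v = ((n:ℂ)+al+be*(m:ℂ)) • v + gOp B m v := by
        rw [ev_pbase, LinearMap.add_apply, LinearMap.smul_apply, Module.End.one_apply]
      have s1 : (eval₂ (RingHom.id _) (((m:ℂ)) • (1 : Module.End ℂ M))
          (pgen B ((n:ℂ)+al) be X)) v ∈ Nn (n+m) := by
        rw [e1]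
        exact htrans n m v hv
      have s2 := htrans (n+m) (l-n-m) _ s1
      have hidx : n + m + (l - n - m) = l := by ring
      rw [hidx] at s2
      rw [ev_prev, LinearMap.add_apply, LinearMap.smul_apply, Module.End.one_apply]
      have hsc : (((n+m : ℤ):ℂ) + al + be * ((l-n-m : ℤ):ℂ))
          = (((l:ℂ)+al) + (be-1)*(((l - n : ℤ):ℂ) - (m:ℂ))) := by
        push_cast
        ring
      rwa [hsc] at s2
    have hc := coeff_apply_mem (Nn l) v _ ((s+1)+(s+1))
      (le_trans natDegree_mul_le (add_le_add hdeg2 hdeg1)) hev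
    have := hc ((s+1)+(s+1))
    rwa [coeff_mul_top hdeg2 hdeg1] at this
  -- downward induction
  have claim : ∀ (t : ℕ), t ≤ r → (∀ i : Fin (r+1), t < (i:ℕ) → B.a i = 0) →
      (∀ i : Fin (r+1), (i:ℕ) ≠ 0 → B.a i = 0) ∧
      ∃ c : ℂ, B.a 0 = c • (1 : Module.End ℂ M) ∧ (be + c = 0 ∨ be + c = 1) := by
    intro t
    induction t with
    | zero =>
      intro _ hvan
      refine ⟨fun i hi => hvan i (Nat.pos_of_ne_zero hi), ?_⟩
      set Y : Module.End ℂ M := be • 1 + B.a 0 with hYdef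
      have hprod : ∀ (n l : ℤ) (v : M), v ∈ Nn n → ((1 - Y) * Y) v ∈ Nn l := by
        intro n l v hv
        have hts := twostep 0 (Nat.zero_le r) hvan n l v hv
        rw [coeff_prev_one B _ _ _ hvan, coeff_pbase_one] at hts
        have hop : -((be-1) • (1 : Module.End ℂ M)) - B.a 0 = 1 - Y := by
          rw [hYdef, sub_smul, one_smul, neg_sub, sub_sub]
        rwa [hop] at hts
      have h0 : (1 - Y) * Y = 0 := killJ _ hprod
      have hYY : Y * Y = Y := by
        have : Y - Y * Y = 0 := by
          rw [← h0, sub_mul, one_mul]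
        rw [sub_eq_zero] at this
        exact this.symm
      have hcomm : Y * B.a 0 = B.a 0 * Y := by
        rw [hYdef, add_mul, mul_add, smul_mul_assoc, mul_smul_comm, one_mul, mul_one]
      have hkerY : ∀ i : Fin (r+1), ∀ v ∈ LinearMap.ker Y, B.a i v ∈ LinearMap.ker Y := by
        intro i v hv
        rcases Nat.eq_zero_or_pos (i:ℕ) with hi | hi
        · have hi0 : i = 0 := Fin.ext (by simpa using hi)
          rw [hi0, LinearMap.mem_ker]
          have := DFunLike.congr_fun hcomm v
          rw [Module.End.mul_apply, Module.End.mul_apply] at this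
          rw [this, LinearMap.mem_ker.mp hv, map_zero]
        · rw [hvan i hi]
          simpa using (LinearMap.ker Y).zero_mem
      rcases hirr _ hkerY with hbot | htop
      · refine ⟨1 - be, ?_, Or.inr (by ring)⟩
        have hY1 : Y = 1 := by
          apply LinearMap.ext
          intro v
          have hker : (1 - Y) v ∈ LinearMap.ker Y := by
            rw [LinearMap.mem_ker]
            have : (Y * (1 - Y)) v = 0 := by
              rw [mul_sub, mul_one, hYY, sub_self]
              rfl
            rwa [Module.End.mul_apply] at this
          rw [hbot, Submodule.mem_bot] at hker
          have : v - Y v = 0 := by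
            rw [LinearMap.sub_apply, Module.End.one_apply] at hker
            exact hker
          rw [Module.End.one_apply]
          rw [sub_eq_zero] at this
          exact this.symm
        have ha0 : B.a 0 = (1 : Module.End ℂ M) - be • 1 := by
          have : B.a 0 = Y - be • 1 := by
            rw [hYdef]
            abel
          rw [this, hY1]
        rw [ha0, sub_smul, one_smul]
      · refine ⟨-be, ?_, Or.inl (by ring)⟩
        have hY0 : Y = 0 := by
          rw [← LinearMap.ker_eq_top]
          exact le_antisymm le_top (htop ▸ le_refl _)
        have ha0 : B.a 0 = -(be • (1 : Module.End ℂ M)) := by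
          have : B.a 0 = Y - be • 1 := by
            rw [hYdef]
            abel
          rw [this, hY0, zero_sub]
        rw [ha0, neg_smul]
    | succ t ih =>
      intro hle hvan
      have hlt : t + 1 < r + 1 := by omega
      -- prove a_{t+1} = 0
      have hsq : B.a ⟨t+1, hlt⟩ * B.a ⟨t+1, hlt⟩ = 0 := by
        have hFF : (((-1:ℂ)^(t+1+1)) • gcoef B ⟨t+1, hlt⟩ * gcoef B ⟨t+1, hlt⟩) = 0 := by
          apply killJ
          intro n l v hv
          have hts := twostep (t+1) hle hvan n l v hv
          rwa [coeff_prev_succ B _ _ _ (t+1) (by omega) hle hvan,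
            coeff_pbase_succ B _ _ (t+1) (by omega) hle] at hts
        have hFF' : gcoef B ⟨t+1, hlt⟩ * gcoef B ⟨t+1, hlt⟩ = 0 := by
          have h1 := congrArg (fun W => (((-1:ℂ)^(t+1+1))⁻¹) • W) hFF
          simpa [smul_smul, smul_mul_assoc,
            inv_mul_cancel₀ (pow_ne_zero (t+1+1) (by norm_num : (-1:ℂ) ≠ 0))] using h1
        have hexp : B.a ⟨t+1, hlt⟩ = ((Nat.factorial (t+1+1) : ℂ)) • gcoef B ⟨t+1, hlt⟩ := by
          rw [gcoef, smul_smul, mul_inv_cancel₀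
            (by exact_mod_cast (Nat.factorial_ne_zero _)), one_smul]
        rw [hexp, smul_mul_assoc, mul_smul_comm, hFF', smul_zero, smul_zero]
      have hkera : ∀ i : Fin (r+1), ∀ v ∈ LinearMap.ker (B.a ⟨t+1, hlt⟩),
          B.a i v ∈ LinearMap.ker (B.a ⟨t+1, hlt⟩) := by
        intro i v hv
        rw [LinearMap.mem_ker] at hv ⊢
        rcases Nat.eq_zero_or_pos (i:ℕ) with hi | hi
        · have hi0 : i = 0 := Fin.ext (by simpa using hi)
          rw [hi0]
          have h0r : ((0 : Fin (r+1)):ℕ) + ((⟨t+1, hlt⟩ : Fin (r+1)):ℕ) ≤ r := by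
            simp only [Fin.val_zero]
            omega
          have hr := B.rel 0 ⟨t+1, hlt⟩ h0r
          have := DFunLike.congr_fun hr v
          rw [LinearMap.sub_apply, Module.End.mul_apply, Module.End.mul_apply,
            LinearMap.smul_apply] at this
          rw [hv, map_zero] at this
          have hidx : (⟨((0 : Fin (r+1)):ℕ) + ((⟨t+1, hlt⟩ : Fin (r+1)):ℕ),
              Nat.lt_succ_of_le h0r⟩ : Fin (r+1)) = ⟨t+1, hlt⟩ := by
            apply Fin.ext
            simp only [Fin.val_zero]
            omega
          rw [hidx, hv, smul_zero] at this
          rw [zero_sub, neg_eq_zero] at this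
          exact this
        · -- i ≥ 1 : the operators commute on ker
          have hcomm2 : B.a i * B.a ⟨t+1, hlt⟩ = B.a ⟨t+1, hlt⟩ * B.a i := by
            by_cases hsum : (i:ℕ) + (t+1) ≤ r
            · have hr := B.rel i ⟨t+1, hlt⟩ hsum
              have hz : B.a ⟨(i:ℕ) + (t+1), Nat.lt_succ_of_le hsum⟩ = 0 :=
                hvan _ (by show t+1 < (i:ℕ)+(t+1); omega)
              rw [hz, smul_zero, sub_eq_zero] at hr
              exact hr
            · exact B.comm i ⟨t+1, hlt⟩ (by show r < (i:ℕ)+(t+1); omega)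
          have := DFunLike.congr_fun hcomm2 v
          rw [Module.End.mul_apply, Module.End.mul_apply] at this
          rw [← this, hv, map_zero]
      have hz : B.a ⟨t+1, hlt⟩ = 0 := by
        rcases hirr _ hkera with hbot | htop
        · apply LinearMap.ext
          intro v
          have : B.a ⟨t+1, hlt⟩ v ∈ LinearMap.ker (B.a ⟨t+1, hlt⟩) := by
            rw [LinearMap.mem_ker, ← Module.End.mul_apply, hsq]
            rfl
          rw [hbot, Submodule.mem_bot] at this
          simpa using this
        · rw [← LinearMap.ker_eq_top]
          exact le_antisymm le_top (htop ▸ le_refl _)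
      refine ih (by omega) ?_
      intro i hi
      by_cases hieq : (i:ℕ) = t+1
      · have : i = ⟨t+1, hlt⟩ := Fin.ext hieq
        rw [this]
        exact hz
      · exact hvan i (by omega)
  exact claim r le_rfl (fun i hi => absurd hi (by have := i.isLt; omega))


/-! ### misc operator lemmas -/

lemma gOp_zero (B : BrData r M) : gOp B 0 = 0 := by
  unfold gOp
  refine Finset.sum_eq_zero (fun i _ => ?_)
  rw [Int.cast_zero, zero_pow (by omega : (i:ℕ)+1 ≠ 0), zero_div, zero_smul]

lemma gOp_scalar (B : BrData r M) (c : ℂ) (h0 : B.a 0 = c • 1)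
    (hz : ∀ i : Fin (r+1), (i:ℕ) ≠ 0 → B.a i = 0) (m : ℤ) :
    gOp B m = ((m:ℂ) * c) • 1 := by
  unfold gOp
  rw [Fin.sum_univ_succ]
  have htail : ∀ i : Fin r,
      ((((m : ℂ) ^ (((i.succ : Fin (r+1)):ℕ) + 1)) /
        (Nat.factorial (((i.succ : Fin (r+1)):ℕ) + 1) : ℂ)) • B.a i.succ) = 0 := by
    intro i
    rw [hz i.succ (by simp [Fin.val_succ]), smul_zero]
  rw [Finset.sum_eq_zero (fun i _ => htail i), add_zero, h0, smul_smul]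
  norm_num [Nat.factorial]

/-! ### graded components -/

lemma comp_mem (al : ℂ) (N'' : Submodule ℂ (ℤ →₀ M))
    (hst : ∀ u ∈ N'', ∃ w ∈ N'', ∀ n : ℤ, w n = ((n:ℂ)+al) • u n) :
    ∀ u ∈ N'', ∀ n : ℤ, Finsupp.single n (u n) ∈ N'' := by
  classical
  suffices H : ∀ (s : Finset ℤ) (u : ℤ →₀ M), u.support ⊆ s → u ∈ N'' →
      ∀ n : ℤ, Finsupp.single n (u n) ∈ N'' by
    exact fun u hu n => H u.support u subset_rfl hu n
  intro s
  induction s using Finset.induction_on with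
  | empty =>
    intro u hsupp hu n
    have hu0 : u = 0 := by
      ext n'
      by_contra hne
      exact absurd (hsupp (Finsupp.mem_support_iff.mpr hne)) (Finset.notMem_empty _)
    rw [hu0]
    simp
  | insert a s ha ih =>
    intro u hsupp hu n
    obtain ⟨w0, hw0, hw0n⟩ := hst u hu
    set w : ℤ →₀ M := w0 - ((a:ℂ)+al) • u with hwdef
    have hwmem : w ∈ N'' := Submodule.sub_mem _ hw0 (Submodule.smul_mem _ _ hu)
    have hwn : ∀ n' : ℤ, w n' = ((n':ℂ) - (a:ℂ)) • u n' := by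
      intro n'
      rw [hwdef, Finsupp.sub_apply, Finsupp.smul_apply, hw0n, ← sub_smul]
      congr 1
      ring
    have hwsupp : w.support ⊆ s := by
      intro n' hn'
      rw [Finsupp.mem_support_iff] at hn'
      have hu' : u n' ≠ 0 := by
        intro h
        exact hn' (by rw [hwn, h, smul_zero])
      have hna : n' ≠ a := by
        intro h
        exact hn' (by rw [hwn, h, sub_self, zero_smul])
      have hmem := hsupp (Finsupp.mem_support_iff.mpr hu')
      rw [Finset.mem_insert] at hmem
      tauto
    have hws := ih w hwsupp hwmem
    have hsing : ∀ n' : ℤ, n' ≠ a → Finsupp.single n' (u n') ∈ N'' := by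
      intro n' hne
      have hc : ((n':ℂ) - (a:ℂ)) ≠ 0 := by
        rw [sub_ne_zero]
        exact_mod_cast hne
      have h1 := hws n'
      rw [hwn, ← Finsupp.smul_single] at h1
      have h2 := Submodule.smul_mem N'' (((n':ℂ) - (a:ℂ))⁻¹) h1
      rwa [smul_smul, inv_mul_cancel₀ hc, one_smul] at h2
    by_cases hna : n = a
    · subst hna
      by_cases hmem : n ∈ u.support
      · have hsum : (∑ n' ∈ u.support, Finsupp.single n' (u n')) = u := Finsupp.sum_single u
        have hsplit : Finsupp.single n (u n)
            + (∑ n' ∈ u.support.erase n, Finsupp.single n' (u n')) = u := by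
          conv_rhs => rw [← hsum]
          exact Finset.add_sum_erase _ _ hmem
        rw [eq_sub_of_add_eq hsplit]
        refine Submodule.sub_mem _ hu (Submodule.sum_mem _ ?_)
        intro n' hn'
        exact hsing n' (Finset.ne_of_mem_erase hn')
      · rw [Finsupp.notMem_support_iff.mp hmem]
        simp
    · exact hsing n hna

end FAaux

open FAaux Polynomial

/-- for irreducible `𝓑_r`-data on a nonzero space `M`, the Virasoro module
`F(M, A(α,β))` is reducible if and only if there is `γ ∈ ℂ` such that `M` is
one-dimensional with `a_0 = γ·id`, `a_i = 0` for `1 ≤ i ≤ r`, `α ∈ ℤ` and `β + γ ∈ {0,1}`. -/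
theorem F_A_reducible_iff {r : ℕ} {M : Type*} [AddCommGroup M] [Module ℂ M]
    [Nontrivial M] (B : BrData r M)
    (hirr : ∀ N : Submodule ℂ M, (∀ i : Fin (r + 1), ∀ v ∈ N, B.a i v ∈ N) → N = ⊥ ∨ N = ⊤)
    (al be : ℂ) (D : ℤ → Module.End ℂ (M ⊗[ℂ] LaurentPolynomial ℂ))
    (hD : IsFA B al be D) :
    (∃ N : Submodule ℂ (M ⊗[ℂ] LaurentPolynomial ℂ),
        (∀ m : ℤ, ∀ u ∈ N, D m u ∈ N) ∧ N ≠ ⊥ ∧ N ≠ ⊤)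
      ↔ ∃ c : ℂ,
          Module.finrank ℂ M = 1 ∧ B.a 0 = c • (1 : Module.End ℂ M) ∧
          (∀ i : Fin (r + 1), (i : ℕ) ≠ 0 → B.a i = 0) ∧
          (∃ k : ℤ, al = (k : ℂ)) ∧ (be + c = 0 ∨ be + c = 1) := by
  classical
  set Φ : (M ⊗[ℂ] LaurentPolynomial ℂ) ≃ₗ[ℂ] (ℤ →₀ M) :=
    (LinearEquiv.lTensor M (AddMonoidAlgebra.coeffLinearEquiv ℂ (S := ℂ) (M := ℤ))) ≪≫ₗ
      TensorProduct.finsuppScalarRight ℂ ℂ M ℤ with hΦdef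
  have hPhiT : ∀ (v : M) (n : ℤ), Φ (v ⊗ₜ[ℂ] LaurentPolynomial.T n) = Finsupp.single n v := by
    intro v n
    have h1 : Φ.symm (Finsupp.single n v) = v ⊗ₜ[ℂ] LaurentPolynomial.T n := by
      rw [hΦdef, LinearEquiv.trans_symm, LinearEquiv.trans_apply,
        TensorProduct.finsuppScalarRight_symm_apply_single]
      rfl
    rw [← h1]
    exact LinearEquiv.apply_symm_apply _ _
  have hPhiS : ∀ (v : M) (n : ℤ),
      Φ.symm (Finsupp.single n v) = v ⊗ₜ[ℂ] LaurentPolynomial.T n := by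
    intro v n
    rw [hΦdef, LinearEquiv.trans_symm, LinearEquiv.trans_apply,
      TensorProduct.finsuppScalarRight_symm_apply_single]
    rfl
  constructor
  · rintro ⟨N, hinv, hnbot, hntop⟩
    set N' : Submodule ℂ (ℤ →₀ M) := N.map Φ.toLinearMap with hN'def
    have hmem : ∀ x : ℤ →₀ M, x ∈ N' ↔ Φ.symm x ∈ N := by
      intro x
      constructor
      · rintro ⟨y, hy, rfl⟩
        simpa using hy
      · intro h
        exact ⟨Φ.symm x, h, by simp⟩
    have hmem' : ∀ x : M ⊗[ℂ] LaurentPolynomial ℂ, x ∈ N ↔ Φ x ∈ N' := by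
      intro x
      rw [hmem]
      simp
    set Nn : ℤ → Submodule ℂ M := fun n => N'.comap (Finsupp.lsingle n) with hNndef
    have hNnmem : ∀ (n : ℤ) (v : M), v ∈ Nn n ↔ Finsupp.single n v ∈ N' := by
      intro n v
      rw [hNndef]
      rw [Submodule.mem_comap, Finsupp.lsingle_apply]
    have htrans : ∀ (n m : ℤ), ∀ v ∈ Nn n,
        (((n:ℂ) + al + be * (m:ℂ)) • v + gOp B m v) ∈ Nn (n+m) := by
      intro n m v hv
      rw [hNnmem] at hv ⊢
      rw [hmem] at hv
      rw [hPhiS] at hv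
      have h3 := hinv m _ hv
      rw [hD m n v] at h3
      rw [hmem, hPhiS]
      exact h3
    -- gradedness
    have hst : ∀ u ∈ N', ∃ w ∈ N', ∀ n : ℤ, w n = ((n:ℂ)+al) • u n := by
      intro u hu
      refine ⟨Φ (D 0 (Φ.symm u)), ?_, ?_⟩
      · rw [hmem]
        simp only [LinearEquiv.symm_apply_apply]
        exact hinv 0 _ ((hmem u).mp hu)
      · have hL : ((Finsupp.lapply ·) : ℤ → _) = fun n => Finsupp.lapply (M := M) (R := ℂ) n := rfl
        intro n
        have heq : (Finsupp.lapply n : (ℤ →₀ M) →ₗ[ℂ] M).comp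
              ((Φ.toLinearMap.comp ((D 0).comp Φ.symm.toLinearMap)))
            = ((n:ℂ)+al) • (Finsupp.lapply n : (ℤ →₀ M) →ₗ[ℂ] M) := by
          apply Finsupp.lhom_ext
          intro n' v
          simp only [LinearMap.comp_apply, LinearMap.smul_apply, Finsupp.lapply_apply,
            LinearEquiv.coe_coe]
          rw [hPhiS, hD 0 n' v, gOp_zero]
          simp only [LinearMap.zero_apply, add_zero, Int.cast_zero, mul_zero]
          rw [hPhiT]
          by_cases hnn : n' = n
          · subst hnn
            simp [Finsupp.single_apply]
          · simp [Finsupp.single_apply, hnn]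
        have := DFunLike.congr_fun heq u
        simpa only [LinearMap.comp_apply, LinearMap.smul_apply, Finsupp.lapply_apply,
          LinearEquiv.coe_coe] using this
    have hcomp := comp_mem al N' hst
    -- Nn is not everywhere ⊥
    have hne : ∃ n₁ : ℤ, Nn n₁ ≠ ⊥ := by
      obtain ⟨u, hu, hune⟩ := Submodule.ne_bot_iff N |>.mp hnbot
      have huN' : Φ u ∈ N' := (hmem' u).mp hu
      have hΦune : Φ u ≠ 0 := by
        intro h
        apply hune
        have := congrArg Φ.symm h
        simpa using this
      have hsupp : ∃ n : ℤ, (Φ u) n ≠ 0 := by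
        by_contra h
        push_neg at h
        exact hΦune (by ext n; simpa using h n)
      obtain ⟨n, hn⟩ := hsupp
      refine ⟨n, ?_⟩
      rw [Submodule.ne_bot_iff]
      exact ⟨(Φ u) n, (hNnmem n _).mpr (hcomp _ huN' n), hn⟩
    -- Nn is not everywhere ⊤
    have hpr : ∃ n₀ : ℤ, Nn n₀ ≠ ⊤ := by
      by_contra h
      push_neg at h
      apply hntop
      rw [eq_top_iff]
      intro x _
      rw [hmem' x]
      have hx : Φ x = (Φ x).sum (fun n v => Finsupp.single n v) := (Finsupp.sum_single _).symm
      rw [hx]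
      refine Submodule.sum_mem _ ?_
      intro n _
      have : (Φ x) n ∈ Nn n := by
        rw [h n]
        trivial
      exact (hNnmem n _).mp this
    obtain ⟨hzero, c, hc0, hor⟩ := core B hirr al be Nn htrans hne hpr
    -- every submodule is ⊥ or ⊤
    have hall : ∀ S : Submodule ℂ M, S = ⊥ ∨ S = ⊤ := by
      intro S
      refine hirr S ?_
      intro i w hw
      rcases Nat.eq_zero_or_pos (i:ℕ) with hi | hi
      · have hi0 : i = 0 := Fin.ext (by simpa using hi)
        rw [hi0, hc0]
        simpa using Submodule.smul_mem S c hw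
      · rw [hzero i (by omega)]
        simpa using S.zero_mem
    -- finrank 1
    obtain ⟨v0, hv0⟩ := exists_ne (0 : M)
    have hrank : Module.finrank ℂ M = 1 := by
      rcases hall (Submodule.span ℂ {v0}) with hb | ht
      · exfalso
        have : v0 ∈ Submodule.span ℂ {v0} := Submodule.mem_span_singleton_self v0
        rw [hb, Submodule.mem_bot] at this
        exact hv0 this
      · exact (finrank_eq_one_iff_of_nonzero v0 hv0).mpr ht
    -- al is an integer
    obtain ⟨n₁, hn₁⟩ := hne
    obtain ⟨n₀, hn₀⟩ := hpr
    have hNn₁ : Nn n₁ = ⊤ := (hall (Nn n₁)).resolve_left hn₁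
    have hNn₀ : Nn n₀ = ⊥ := (hall (Nn n₀)).resolve_right hn₀
    have hv0mem : v0 ∈ Nn n₁ := by
      rw [hNn₁]
      trivial
    have hscal : ((n₁:ℂ) + al + (be + c) * ((n₀ - n₁ : ℤ):ℂ)) = 0 := by
      have ht := htrans n₁ (n₀ - n₁) v0 hv0mem
      rw [show n₁ + (n₀ - n₁) = n₀ from by ring, hNn₀, Submodule.mem_bot] at ht
      rw [gOp_scalar B c hc0 hzero] at ht
      rw [LinearMap.smul_apply, Module.End.one_apply, ← add_smul] at ht
      have := (smul_eq_zero.mp ht).resolve_right hv0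
      calc ((n₁:ℂ) + al + (be + c) * ((n₀ - n₁ : ℤ):ℂ))
          = ((n₁:ℂ) + al + be * ((n₀ - n₁ : ℤ):ℂ) + ((n₀ - n₁ : ℤ):ℂ) * c) := by ring
        _ = 0 := this
    refine ⟨c, hrank, hc0, hzero, ?_, hor⟩
    rcases hor with h1 | h1
    · refine ⟨-n₁, ?_⟩
      rw [h1, zero_mul, add_zero] at hscal
      push_cast
      linear_combination hscal
    · refine ⟨-n₀, ?_⟩
      rw [h1, one_mul] at hscal
      push_cast
      push_cast at hscal
      linear_combination hscal
  · rintro ⟨c, hrank, hc0, hzero, ⟨k, hk⟩, hor⟩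
    have hgop : ∀ (m : ℤ), gOp B m = ((m:ℂ) * c) • 1 := gOp_scalar B c hc0 hzero
    obtain ⟨v0, hv0⟩ := exists_ne (0 : M)
    have htmul_ne : ∀ (v : M) (n : ℤ), v ≠ 0 →
        (v ⊗ₜ[ℂ] (LaurentPolynomial.T n : LaurentPolynomial ℂ) : M ⊗[ℂ] LaurentPolynomial ℂ) ≠ 0 := by
      intro v n hv h
      apply hv
      have := congrArg Φ h
      rw [hPhiT, map_zero] at this
      have := DFunLike.congr_fun this n
      simpa [Finsupp.single_apply] using this
    rcases hor with hbc | hbc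
    · -- be + c = 0 : take N = M ⊗ T^{-k}
      set ι : M →ₗ[ℂ] (M ⊗[ℂ] LaurentPolynomial ℂ) :=
        (TensorProduct.mk ℂ M (LaurentPolynomial ℂ)).flip (LaurentPolynomial.T (-k)) with hιdef
      have hιapp : ∀ v : M, ι v = v ⊗ₜ[ℂ] LaurentPolynomial.T (-k) := fun v => rfl
      refine ⟨LinearMap.range ι, ?_, ?_, ?_⟩
      · intro m u hu
        obtain ⟨v, rfl⟩ := hu
        rw [hιapp, hD m (-k) v]
        have hvec : (((-k : ℤ):ℂ) + al + be * (m:ℂ)) • v + gOp B m v = 0 := by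
          rw [hgop, LinearMap.smul_apply, Module.End.one_apply, ← add_smul]
          have : (((-k : ℤ):ℂ) + al + be * (m:ℂ) + (m:ℂ) * c) = 0 := by
            rw [hk]
            push_cast
            linear_combination (m:ℂ) * hbc
          rw [this, zero_smul]
        rw [hvec, TensorProduct.zero_tmul]
        exact Submodule.zero_mem _
      · rw [Submodule.ne_bot_iff]
        exact ⟨ι v0, ⟨v0, rfl⟩, by rw [hιapp]; exact htmul_ne v0 _ hv0⟩
      · intro htop
        have hx : v0 ⊗ₜ[ℂ] LaurentPolynomial.T (-k+1) ∈ LinearMap.range ι := by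
          rw [htop]
          trivial
        obtain ⟨v, hv⟩ := hx
        rw [hιapp] at hv
        have := congrArg (fun y => (Φ y) (-k+1)) hv
        simp only [hPhiT] at this
        rw [Finsupp.single_apply, Finsupp.single_apply, if_neg (by omega), if_pos rfl] at this
        exact hv0 this.symm
    · -- be + c = 1 : take N spanned by v ⊗ T n, n ≠ -k
      set G : Set (M ⊗[ℂ] LaurentPolynomial ℂ) :=
        {x | ∃ (v : M) (n : ℤ), n ≠ -k ∧ x = v ⊗ₜ[ℂ] LaurentPolynomial.T n} with hGdef
      refine ⟨Submodule.span ℂ G, ?_, ?_, ?_⟩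
      · intro m u hu
        refine Submodule.span_induction ?_ ?_ ?_ ?_ hu
        · rintro x ⟨v, n, hn, rfl⟩
          rw [hD m n v]
          have hvec : (((n : ℤ):ℂ) + al + be * (m:ℂ)) • v + gOp B m v
              = (((n:ℂ) + (k:ℂ) + (m:ℂ))) • v := by
            rw [hgop, LinearMap.smul_apply, Module.End.one_apply, ← add_smul, hk]
            congr 1
            linear_combination (m:ℂ) * hbc
          rw [hvec]
          by_cases hnm : n + m = -k
          · have : ((n:ℂ) + (k:ℂ) + (m:ℂ)) = 0 := by
              have : ((n:ℤ):ℂ) + ((m:ℤ):ℂ) = ((-k : ℤ) : ℂ) := by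
                rw [← Int.cast_add, hnm]
              push_cast at this
              linear_combination this
            rw [this, zero_smul, TensorProduct.zero_tmul]
            exact Submodule.zero_mem _
          · refine Submodule.subset_span ?_
            exact ⟨((n:ℂ) + (k:ℂ) + (m:ℂ)) • v, n + m, hnm, rfl⟩
        · rw [map_zero]
          exact Submodule.zero_mem _
        · intro x y _ _ hx hy
          rw [map_add]
          exact Submodule.add_mem _ hx hy
        · intro a x _ hx
          rw [map_smul]
          exact Submodule.smul_mem _ a hx
      · rw [Submodule.ne_bot_iff]
        refine ⟨v0 ⊗ₜ[ℂ] LaurentPolynomial.T (-k+1),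
          Submodule.subset_span ⟨v0, -k+1, by omega, rfl⟩, htmul_ne v0 _ hv0⟩
      · intro htop
        have hker : Submodule.span ℂ G ≤
            LinearMap.ker ((Finsupp.lapply (-k) : (ℤ →₀ M) →ₗ[ℂ] M).comp Φ.toLinearMap) := by
          rw [Submodule.span_le]
          rintro x ⟨v, n, hn, rfl⟩
          rw [SetLike.mem_coe, LinearMap.mem_ker, LinearMap.comp_apply]
          simp only [LinearEquiv.coe_coe]
          rw [hPhiT, Finsupp.lapply_apply, Finsupp.single_apply, if_neg hn]
        have hx : v0 ⊗ₜ[ℂ] LaurentPolynomial.T (-k) ∈ Submodule.span ℂ G := by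
          rw [htop]
          trivial
        have := hker hx
        rw [LinearMap.mem_ker, LinearMap.comp_apply] at this
        simp only [LinearEquiv.coe_coe] at this
        rw [hPhiT, Finsupp.lapply_apply, Finsupp.single_apply, if_pos rfl] at this
        exact hv0 this
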